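/- arXiv:2603.17142 — 3 statements merged into one kernel-verified Lean document; each statement's English description precedes it below -/
import Mathlib

section
/- Let M be a d×d real matrix such that no sum of k eigenvalues of M (with repetition) equals zero. Then for any k-th order tensor C, the k-th order continuous Lyapunov equation K ×_1 M + ... + K ×_k M + C = 0 has a unique solution K. -/
open Finset Matrix

/-- The `i`-mode (Tucker) product of a `k`-th order `d`-dimensional tensor with a matrix. -/
def modeProd {d k : ℕ} (K : (Fin k → Fin d) → ℝ) (M : Matrix (Fin d) (Fin d) ℝ)
    (i : Fin k) : (Fin k → Fin d) → ℝ :=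
  fun a => ∑ x : Fin d, M (a i) x * K (Function.update a i x)

namespace LyapAux

variable {d k : ℕ} {R : Type*} [CommRing R]

/-- The `i`-mode product as a linear endomorphism of the space of tensors. -/
def modeEnd (i : Fin k) (P : Matrix (Fin d) (Fin d) R) :
    Module.End R ((Fin k → Fin d) → R) where
  toFun K := fun a => ∑ x : Fin d, P (a i) x * K (Function.update a i x)
  map_add' K L := by
    funext a
    simp [mul_add, Finset.sum_add_distrib]
  map_smul' c K := by
    funext a
    simp only [Pi.smul_apply, smul_eq_mul, RingHom.id_apply, Finset.mul_sum]
    exact Finset.sum_congr rfl fun x _ => by ring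

lemma modeEnd_apply (i : Fin k) (P : Matrix (Fin d) (Fin d) R)
    (K : (Fin k → Fin d) → R) (a : Fin k → Fin d) :
    modeEnd i P K a = ∑ x : Fin d, P (a i) x * K (Function.update a i x) := rfl

lemma modeEnd_one (i : Fin k) : modeEnd i (1 : Matrix (Fin d) (Fin d) R) = 1 := by
  refine LinearMap.ext fun K => funext fun a => ?_
  simp [modeEnd_apply, Matrix.one_apply, ite_mul, Finset.sum_ite_eq,
    Function.update_eq_self]

lemma modeEnd_mul (i : Fin k) (P Q : Matrix (Fin d) (Fin d) R) :
    modeEnd i (P * Q) = modeEnd i P * modeEnd i Q := by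
  refine LinearMap.ext fun K => funext fun a => ?_
  simp only [Module.End.mul_apply, modeEnd_apply, Matrix.mul_apply, Finset.sum_mul,
    Function.update_self, Function.update_idem, Finset.mul_sum]
  rw [Finset.sum_comm]
  exact Finset.sum_congr rfl fun y _ => Finset.sum_congr rfl fun x _ => by ring

/-- `modeEnd i` as an algebra homomorphism. -/
def modeHom (i : Fin k) :
    Matrix (Fin d) (Fin d) R →ₐ[R] Module.End R ((Fin k → Fin d) → R) :=
  AlgHom.ofLinearMap
    { toFun := modeEnd i
      map_add' := fun P Q => by
        refine LinearMap.ext fun K => funext fun a => ?_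
        simp [modeEnd_apply, add_mul, Finset.sum_add_distrib]
      map_smul' := fun c P => by
        refine LinearMap.ext fun K => funext fun a => ?_
        simp only [modeEnd_apply, Matrix.smul_apply, smul_eq_mul, RingHom.id_apply,
          LinearMap.smul_apply, Pi.smul_apply, Finset.mul_sum]
        exact Finset.sum_congr rfl fun x _ => by ring }
    (modeEnd_one i) (modeEnd_mul i)

lemma modeEnd_commute {i j : Fin k} (hij : i ≠ j) (P Q : Matrix (Fin d) (Fin d) R) :
    Commute (modeEnd i P) (modeEnd j Q) := by
  show _ * _ = _ * _
  refine LinearMap.ext fun K => funext fun a => ?_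
  simp only [Module.End.mul_apply, modeEnd_apply]
  have h1 : ∀ (x y : Fin d), Function.update (Function.update a i x) j y
      = Function.update (Function.update a j y) i x := fun x y =>
    Function.update_comm hij x y a
  simp only [Function.update_of_ne hij.symm, Function.update_of_ne hij, Finset.mul_sum]
  rw [Finset.sum_comm]
  exact Finset.sum_congr rfl fun y _ => Finset.sum_congr rfl fun x _ => by
    rw [h1]; ring

end LyapAux

open LyapAux Module

set_option maxHeartbeats 1000000 in
/-- Abstract key lemma: if `A i` are commuting endomorphisms of a finite-dimensional complex
vector space, all annihilated by a polynomial `p`, and no sum of `k` roots of `p` is zero,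
then `∑ i, A i` has trivial kernel. -/
lemma LyapAux.ker_sum_eq_bot {W : Type*} [AddCommGroup W] [Module ℂ W] [FiniteDimensional ℂ W]
    {k : ℕ} (A : Fin k → Module.End ℂ W)
    (hAcomm : ∀ i j, Commute (A i) (A j))
    (p : Polynomial ℂ) (hAchar : ∀ i, Polynomial.aeval (A i) p = 0)
    (hM : ∀ f : Fin k → ℂ, (∀ i, p.IsRoot (f i)) → (∑ i : Fin k, f i) ≠ 0) :
    LinearMap.ker (∑ i, A i) = ⊥ := by
  classical
  set Lc : Module.End ℂ W := ∑ i, A i with hLc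
  by_contra hne
  set V : Submodule ℂ W := LinearMap.ker Lc with hV
  haveI : Nontrivial V := Submodule.nontrivial_iff_ne_bot.mpr hne
  have hmaps : ∀ i, Set.MapsTo (A i) V V := by
    intro i x hx
    have hcomm : Commute (A i) Lc := Commute.sum_right _ _ _ fun j _ => hAcomm i j
    have hx' : Lc (A i x) = A i (Lc x) := by
      rw [← Module.End.mul_apply, ← Module.End.mul_apply, hcomm.eq]
    have hx0 : Lc x = 0 := hx
    show A i x ∈ LinearMap.ker Lc
    rw [LinearMap.mem_ker, hx', hx0, map_zero]
  set B : Fin k → Module.End ℂ V := fun i => (A i).restrict (hmaps i) with hB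
  have hBcomm : ∀ i j, Commute (B i) (B j) := fun i j =>
    LinearMap.restrict_commute (hAcomm i j) _ _
  have hBsum : (∑ i, B i) = 0 := by
    ext v
    have h1 : (↑((∑ i, B i) v) : W) = Lc ↑v := by
      simp only [LinearMap.sum_apply, Submodule.coe_sum, hLc]
      exact Finset.sum_congr rfl fun i _ => rfl
    have hv : Lc (↑v : W) = 0 := v.2
    simp only [LinearMap.zero_apply, ZeroMemClass.coe_zero]
    rw [h1, hv]
  -- simultaneous generalized eigenspaces fill V
  have htop : ⨆ χ : Fin k → ℂ, ⨅ i, (B i).maxGenEigenspace (χ i) = ⊤ :=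
    Module.End.iSup_iInf_maxGenEigenspace_eq_top_of_iSup_maxGenEigenspace_eq_top_of_commute
      B (fun i j _ => hBcomm i j) (fun i => Module.End.iSup_maxGenEigenspace_eq_top (B i))
  obtain ⟨χ, hχ⟩ : ∃ χ : Fin k → ℂ, (⨅ i, (B i).maxGenEigenspace (χ i)) ≠ ⊥ := by
    by_contra h
    push_neg at h
    rw [show (⨆ χ : Fin k → ℂ, ⨅ i, (B i).maxGenEigenspace (χ i)) = ⊥ by
      simp [h]] at htop
    exact bot_ne_top htop
  set U : Submodule ℂ V := ⨅ i, (B i).maxGenEigenspace (χ i) with hU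
  obtain ⟨u, huU, hu0⟩ := Submodule.exists_mem_ne_zero_of_ne_bot hχ
  -- each χ i is a root of p
  have hroot : ∀ i, p.IsRoot (χ i) := by
    intro i
    have hUle : U ≤ (B i).maxGenEigenspace (χ i) := iInf_le _ i
    have hBev : (B i).HasEigenvalue (χ i) := by
      have hne' : (B i).maxGenEigenspace (χ i) ≠ ⊥ := by
        intro h
        apply hu0
        have h2 := hUle huU
        rw [h] at h2
        simpa using h2
      rw [Module.End.maxGenEigenspace_eq_genEigenspace_finrank] at hne'
      exact Module.End.hasEigenvalue_of_hasGenEigenvalue hne'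
    obtain ⟨v, hv⟩ := hBev.exists_hasEigenvector
    have hvW : A i (V.subtype v) = χ i • (V.subtype v) := by
      have h2 := hv.apply_eq_smul
      have h3 : V.subtype (B i v) = χ i • V.subtype v := by rw [h2, _root_.map_smul]
      exact h3
    have hAev : (A i).HasEigenvalue (χ i) := by
      refine Module.End.hasEigenvalue_of_hasEigenvector
        (x := V.subtype v) ⟨?_, fun h => hv.2 (ZeroMemClass.coe_eq_zero.mp h)⟩
      rw [Module.End.mem_eigenspace_iff]
      exact hvW
    have hmin : (minpoly ℂ (A i)).IsRoot (χ i) :=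
      (Module.End.hasEigenvalue_iff_isRoot).mp hAev
    exact hmin.dvd (minpoly.dvd ℂ (A i) (hAchar i))
  -- the sum of the χ i is zero
  have hsum : (∑ i, χ i) = 0 := by
    set N : Fin k → Module.End ℂ V := fun i => B i - algebraMap ℂ (Module.End ℂ V) (χ i)
      with hN
    have hNcomm : ∀ i j, Commute (N i) (N j) := by
      intro i j
      have c1 : Commute (B i) (N j) :=
        (hBcomm i j).sub_right (Algebra.commute_algebraMap_right _ _)
      have c2 : Commute (algebraMap ℂ (Module.End ℂ V) (χ i)) (N j) :=
        (Algebra.commute_algebraMap_left _ _).sub_right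
          (Algebra.commute_algebraMap_left _ _)
      exact c1.sub_left c2
    have hUmaps : ∀ i, Set.MapsTo (N i) U U := by
      intro i x hx
      have hx' : ∀ j, x ∈ (B j).maxGenEigenspace (χ j) := (Submodule.mem_iInf _).mp hx
      show _ ∈ U
      refine (Submodule.mem_iInf _).mpr fun j => ?_
      have hc : Commute (B j) (N i) :=
        (hBcomm j i).sub_right (Algebra.commute_algebraMap_right _ _)
      exact Module.End.mapsTo_maxGenEigenspace_of_comm hc (χ j) (hx' j)
    have hUmaps' : Set.MapsTo ⇑(∑ i, N i) ↑U ↑U := by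
      intro x hx
      have h4 : (∑ i, N i) x = ∑ i, N i x := by
        simp only [LinearMap.sum_apply]
      show (∑ i, N i) x ∈ U
      rw [h4]
      exact Submodule.sum_mem U fun i _ => hUmaps i hx
    have hnil : ∀ i, IsNilpotent ((N i).restrict (hUmaps i)) := by
      intro i
      exact Module.End.isNilpotent_restrict_of_le (iInf_le _ i)
        (Module.End.isNilpotent_restrict_maxGenEigenspace_sub_algebraMap (B i) (χ i))
    have hressum :
        (∑ i, (N i).restrict (hUmaps i)) = ((∑ i, N i).restrict hUmaps') := by
      refine LinearMap.ext fun x => Subtype.ext ?_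
      simp only [LinearMap.sum_apply, Submodule.coe_sum, LinearMap.restrict_coe_apply]
      show ∑ i, N i (x : V) = (∑ i, N i) (x : V)
      rw [LinearMap.sum_apply]
    have hnilsum : IsNilpotent ((∑ i, N i).restrict hUmaps') := by
      rw [← hressum]
      exact Commute.isNilpotent_sum (fun i _ => hnil i) (fun i j _ _ => 
        LinearMap.restrict_commute (hNcomm i j) _ _)
    have hsum' : (∑ i, N i) = - algebraMap ℂ (Module.End ℂ V) (∑ i, χ i) := by
      rw [hN]
      simp only [Finset.sum_sub_distrib]
      rw [hBsum, zero_sub, map_sum]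
    obtain ⟨n, hn⟩ := hnilsum
    have hap := LinearMap.congr_fun hn ⟨u, huU⟩
    rw [Module.End.pow_restrict (h := hUmaps')] at hap
    have hap2 : ((∑ i, N i) ^ n) u = 0 := by
      have := congrArg (Subtype.val) hap
      simpa [LinearMap.restrict_apply] using this
    rw [hsum'] at hap2
    have hap3 : ((- (∑ i, χ i)) ^ n) • u = 0 := by
      have h5 : (- algebraMap ℂ (Module.End ℂ V) (∑ i, χ i)) ^ n =
          algebraMap ℂ (Module.End ℂ V) ((- (∑ i, χ i)) ^ n) := by
        rw [← map_neg, ← map_pow]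
      rw [h5] at hap2
      rw [Module.algebraMap_end_apply] at hap2
      exact hap2
    have hz : ((- (∑ i, χ i)) ^ n) = 0 :=
      (smul_eq_zero.mp hap3).resolve_right hu0
    exact neg_eq_zero.mp (pow_eq_zero_iff'.mp hz).1
  exact hM χ hroot hsum

set_option maxHeartbeats 1000000 in
/-- If no sum of `k` (complex) eigenvalues of `M`, with repetition, equals zero, then for
every `k`-th order tensor `C` the `k`-th order continuous Lyapunov equation
`K ×₁ M + ⋯ + K ×ₖ M + C = 0` has a unique solution `K`. -/
theorem stmt_4 (d k : ℕ) (hk : 1 ≤ k) (M : Matrix (Fin d) (Fin d) ℝ)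
    (hM : ∀ f : Fin k → ℂ,
      (∀ i, (M.map Complex.ofReal).charpoly.IsRoot (f i)) → (∑ i : Fin k, f i) ≠ 0)
    (C : (Fin k → Fin d) → ℝ) :
    ∃! K : (Fin k → Fin d) → ℝ,
      ∀ a : Fin k → Fin d, (∑ i : Fin k, modeProd K M i a) + C a = 0 := by
  classical
  set Mc : Matrix (Fin d) (Fin d) ℂ := M.map Complex.ofReal with hMc
  set A : Fin k → Module.End ℂ ((Fin k → Fin d) → ℂ) := fun i => modeEnd i Mc with hA
  set Lc : Module.End ℂ ((Fin k → Fin d) → ℂ) := ∑ i, A i with hLc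
  have hAcomm : ∀ i j, Commute (A i) (A j) := by
    intro i j
    rcases eq_or_ne i j with rfl | hij
    · exact Commute.refl _
    · exact modeEnd_commute hij Mc Mc
  have hAchar : ∀ i, Polynomial.aeval (A i) Mc.charpoly = 0 := by
    intro i
    have h0 : A i = modeHom (R := ℂ) i Mc := rfl
    rw [h0, Polynomial.aeval_algHom_apply, Matrix.aeval_self_charpoly, map_zero]
  have hinj : LinearMap.ker Lc = ⊥ :=
    LyapAux.ker_sum_eq_bot A hAcomm Mc.charpoly hAchar hM
  -- transfer injectivity to the real operator and conclude
  set Lr : Module.End ℝ ((Fin k → Fin d) → ℝ) := ∑ i, modeEnd i M with hLr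
  have hLr_apply : ∀ (K : (Fin k → Fin d) → ℝ) (a : Fin k → Fin d),
      Lr K a = ∑ i : Fin k, modeProd K M i a := by
    intro K a
    rw [hLr, LinearMap.sum_apply]
    simp only [Finset.sum_apply]
    rfl
  have hLrinj : Function.Injective Lr := by
    rw [← LinearMap.ker_eq_bot]
    rw [Submodule.eq_bot_iff]
    intro K hK
    have hK0 : Lr K = 0 := hK
    set Kc : (Fin k → Fin d) → ℂ := fun a => (K a : ℂ) with hKc
    have hKcker : Lc Kc = 0 := by
      funext a
      have h1 : Lc Kc a = ∑ i : Fin k, ∑ x : Fin d,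
          (M (a i) x : ℂ) * (K (Function.update a i x) : ℂ) := by
        rw [hLc, LinearMap.sum_apply]
        simp only [Finset.sum_apply]
        refine Finset.sum_congr rfl fun i _ => ?_
        rw [hA]
        rfl
      have h2 : Lr K a = ∑ i : Fin k, ∑ x : Fin d, M (a i) x * K (Function.update a i x) := by
        rw [hLr, LinearMap.sum_apply]
        simp only [Finset.sum_apply]
        rfl
      have h3 : Lc Kc a = ((Lr K a : ℝ) : ℂ) := by
        rw [h1, h2]
        push_cast
        rfl
      rw [h3, hK0]
      simp
    have hKc0 : Kc = 0 := by
      have := hinj ▸ (LinearMap.mem_ker.mpr hKcker)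
      simpa using this
    funext a
    have := congrFun hKc0 a
    simpa [hKc] using this
  have hLrbij : Function.Bijective Lr :=
    ⟨hLrinj, (LinearMap.injective_iff_surjective).mp hLrinj⟩
  set e := LinearEquiv.ofBijective Lr hLrbij with he
  have key : ∀ K : (Fin k → Fin d) → ℝ,
      (∀ a : Fin k → Fin d, (∑ i : Fin k, modeProd K M i a) + C a = 0) ↔ Lr K = -C := by
    intro K
    constructor
    · intro h
      funext a
      rw [hLr_apply]
      simp only [Pi.neg_apply]
      linarith [h a]
    · intro h a
      rw [← hLr_apply, h]
      simp
  refine ⟨e.symm (-C), (key _).mpr ?_, fun K hK => ?_⟩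
  · have h1 : Lr (e.symm (-C)) = e (e.symm (-C)) := rfl
    rw [h1, e.apply_symm_apply]
  · have h2 : e K = -C := (key K).mp hK
    rw [← h2, e.symm_apply_apply]
end

section
/- Let G: ℝ^{b×n} → ℝ^n map a matrix X to the right singular vector of its smallest singular value, and suppose A ∈ ℝ^{b×n} has a simple smallest singular value equal to zero with right singular vector v (‖v‖=1). Then G is differentiable at A with Jacobian DG(A) = -(vᵀ ⊗ A⁺) with respect to the vectorization of X, where A⁺ is the Moore–Penrose inverse of A. -/
open Matrix

attribute [local instance] Matrix.normedAddCommGroup Matrix.normedSpace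

/-- `B` is the Moore–Penrose pseudoinverse of `A`: the four Penrose conditions. -/
def IsMoorePenrose {b n : ℕ} (A : Matrix (Fin b) (Fin n) ℝ)
    (B : Matrix (Fin n) (Fin b) ℝ) : Prop :=
  A * B * A = A ∧ B * A * B = B ∧ (A * B)ᵀ = A * B ∧ (B * A)ᵀ = B * A

/-- The candidate derivative `vec(Y) ↦ -(vᵀ ⊗ A⁺) vec(Y)`, i.e. `Y ↦ -A⁺ Y v`,
as a linear map. -/
noncomputable def jacMap {b n : ℕ} (Apinv : Matrix (Fin n) (Fin b) ℝ) (v : Fin n → ℝ) :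
    Matrix (Fin b) (Fin n) ℝ →ₗ[ℝ] (Fin n → ℝ) where
  toFun Y := -(Apinv.mulVec (Y.mulVec v))
  map_add' Y Z := by
    simp [Matrix.add_mulVec, Matrix.mulVec_add, neg_add, add_comm]
  map_smul' c Y := by
    simp [Matrix.smul_mulVec, Matrix.mulVec_smul]

/-- curry a bilinear map into a continuous linear map, in finite dimensions -/
noncomputable def bilinCLM {E F G : Type*} [NormedAddCommGroup E] [NormedSpace ℝ E]
    [NormedAddCommGroup F] [NormedSpace ℝ F] [NormedAddCommGroup G] [NormedSpace ℝ G]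
    [FiniteDimensional ℝ E] [FiniteDimensional ℝ F]
    (f : E →ₗ[ℝ] F →ₗ[ℝ] G) : E →L[ℝ] F →L[ℝ] G :=
  LinearMap.toContinuousLinearMap
    ((LinearMap.toContinuousLinearMap :
        (F →ₗ[ℝ] G) ≃ₗ[ℝ] (F →L[ℝ] G)).toLinearMap.comp f)

@[simp] lemma bilinCLM_apply {E F G : Type*} [NormedAddCommGroup E] [NormedSpace ℝ E]
    [NormedAddCommGroup F] [NormedSpace ℝ F] [NormedAddCommGroup G] [NormedSpace ℝ G]
    [FiniteDimensional ℝ E] [FiniteDimensional ℝ F]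
    (f : E →ₗ[ℝ] F →ₗ[ℝ] G) (x : E) (y : F) : bilinCLM f x y = f x y := by
  simp [bilinCLM]

noncomputable def mulVecCLM (b n : ℕ) : Matrix (Fin b) (Fin n) ℝ →L[ℝ]
    (Fin n → ℝ) →L[ℝ] (Fin b → ℝ) :=
  bilinCLM (LinearMap.mk₂ ℝ (fun X x => X *ᵥ x)
    (fun X Y x => Matrix.add_mulVec X Y x)
    (fun c X x => Matrix.smul_mulVec c X x)
    (fun X x y => Matrix.mulVec_add X x y)
    (fun c X x => Matrix.mulVec_smul X c x))

@[simp] lemma mulVecCLM_apply {b n : ℕ} (X : Matrix (Fin b) (Fin n) ℝ) (x : Fin n → ℝ) :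
    mulVecCLM b n X x = X *ᵥ x := rfl

noncomputable def tmulVecCLM (b n : ℕ) : Matrix (Fin b) (Fin n) ℝ →L[ℝ]
    (Fin b → ℝ) →L[ℝ] (Fin n → ℝ) :=
  bilinCLM (LinearMap.mk₂ ℝ (fun X w => Xᵀ *ᵥ w)
    (fun X Y w => by simp [Matrix.transpose_add, Matrix.add_mulVec])
    (fun c X w => by simp [Matrix.transpose_smul, Matrix.smul_mulVec])
    (fun X w y => Matrix.mulVec_add Xᵀ w y)
    (fun c X w => Matrix.mulVec_smul Xᵀ c w))

@[simp] lemma tmulVecCLM_apply {b n : ℕ} (X : Matrix (Fin b) (Fin n) ℝ) (w : Fin b → ℝ) :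
    tmulVecCLM b n X w = Xᵀ *ᵥ w := rfl

noncomputable def dotCLM (n : ℕ) : (Fin n → ℝ) →L[ℝ] (Fin n → ℝ) →L[ℝ] ℝ :=
  bilinCLM (LinearMap.mk₂ ℝ (fun x y => x ⬝ᵥ y)
    (fun x y z => add_dotProduct x y z)
    (fun c x y => smul_dotProduct c x y)
    (fun x y z => dotProduct_add x y z)
    (fun c x y => dotProduct_smul c x y))

@[simp] lemma dotCLM_apply {n : ℕ} (x y : Fin n → ℝ) : dotCLM n x y = x ⬝ᵥ y := by
  simp [dotCLM]


lemma hasStrictFDerivAt_congr_deriv {E F : Type*} [NormedAddCommGroup E] [NormedSpace ℝ E]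
    [NormedAddCommGroup F] [NormedSpace ℝ F] {f : E → F} {f' g' : E →L[ℝ] F} {x : E}
    (h : HasStrictFDerivAt f f' x) (e : f' = g') : HasStrictFDerivAt f g' x := e ▸ h

/-- The implicit-function map `Φ(u, μ, X) = ((XᵀX)u - μu, ⟨u,u⟩ - 1, X)`. -/
noncomputable def Phi (b n : ℕ) :
    (((Fin n → ℝ) × ℝ) × Matrix (Fin b) (Fin n) ℝ) →
      (((Fin n → ℝ) × ℝ) × Matrix (Fin b) (Fin n) ℝ) := fun p =>
  ((p.2ᵀ *ᵥ (p.2 *ᵥ p.1.1) - p.1.2 • p.1.1, p.1.1 ⬝ᵥ p.1.1 - 1), p.2)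

/-- The derivative of `Phi` at `((v,0),A)` when `A *ᵥ v = 0`. -/
noncomputable def ell {b n : ℕ} (A : Matrix (Fin b) (Fin n) ℝ) (v : Fin n → ℝ) :
    (((Fin n → ℝ) × ℝ) × Matrix (Fin b) (Fin n) ℝ) →ₗ[ℝ]
      (((Fin n → ℝ) × ℝ) × Matrix (Fin b) (Fin n) ℝ) where
  toFun q := ((Aᵀ *ᵥ (A *ᵥ q.1.1) + Aᵀ *ᵥ (q.2 *ᵥ v) - q.1.2 • v,
      v ⬝ᵥ q.1.1 + q.1.1 ⬝ᵥ v), q.2)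
  map_add' q r := by
    ext <;>
      simp [Matrix.mulVec_add, Matrix.add_mulVec, dotProduct_add, add_dotProduct,
        add_smul] <;> ring
  map_smul' c q := by
    ext <;>
      simp [Matrix.mulVec_smul, Matrix.smul_mulVec, dotProduct_smul,
        smul_dotProduct, smul_smul] <;> ring

lemma ell_injective {b n : ℕ} (A : Matrix (Fin b) (Fin n) ℝ) (v : Fin n → ℝ)
    (hvv : v ⬝ᵥ v = 1) (hAv : A *ᵥ v = 0)
    (hsimple : ∀ w : Fin n → ℝ, (Aᵀ * A) *ᵥ w = 0 → ∃ c : ℝ, w = c • v) :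
    Function.Injective (ell A v) := by
  rw [← LinearMap.ker_eq_bot, LinearMap.ker_eq_bot']
  rintro ⟨⟨y, ν⟩, Y⟩ hq
  rw [Prod.ext_iff, Prod.ext_iff] at hq
  obtain ⟨⟨h1, h2⟩, h3⟩ := hq
  simp only [ell, LinearMap.coe_mk, AddHom.coe_mk] at h1 h2 h3
  subst h3
  simp only [Matrix.zero_mulVec, Matrix.mulVec_zero, add_zero, Prod.snd_zero, Prod.fst_zero] at h1 h2
  have hvy : v ⬝ᵥ y = 0 := by
    rw [dotProduct_comm y v] at h2; linarith
  have hAAy : Aᵀ *ᵥ (A *ᵥ y) = ν • v := by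
    have := h1; rwa [sub_eq_zero] at this
  have hν : ν = 0 := by
    have hdot : v ⬝ᵥ (Aᵀ *ᵥ (A *ᵥ y)) = 0 := by
      rw [Matrix.mulVec_mulVec, Matrix.dotProduct_mulVec, ← Matrix.vecMul_vecMul,
        Matrix.vecMul_transpose, hAv, Matrix.zero_vecMul, zero_dotProduct]
    rw [hAAy, dotProduct_smul, hvv] at hdot
    simpa using hdot
  rw [hν, zero_smul] at hAAy
  obtain ⟨c, hc⟩ := hsimple y (by rw [← Matrix.mulVec_mulVec]; exact hAAy)
  have hc0 : c = 0 := by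
    have := hvy
    rw [hc, dotProduct_smul, hvv, smul_eq_mul, mul_one] at this
    exact this
  rw [hc0, zero_smul] at hc
  simp [hc, hν]

set_option maxHeartbeats 1000000 in
/-- If `A` has a simple smallest singular value `0` with unit right singular vector `v`,
and `G` maps each matrix `X` to a unit eigenvector of `XᵀX` corresponding to its smallest
eigenvalue, with `G` continuous at `A` and `G A = v`, then `G` is differentiable at `A`
with derivative `Y ↦ -A⁺ Y v`, i.e. Jacobian `-(vᵀ ⊗ A⁺)` in vectorized form. -/
theorem stmt_8 {b n : ℕ} (A : Matrix (Fin b) (Fin n) ℝ)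
    (Apinv : Matrix (Fin n) (Fin b) ℝ) (hpinv : IsMoorePenrose A Apinv)
    (v : Fin n → ℝ) (hv : ∑ i, v i ^ 2 = 1) (hAv : A.mulVec v = 0)
    (hsimple : ∀ w : Fin n → ℝ, (Aᵀ * A).mulVec w = 0 → ∃ c : ℝ, w = c • v)
    (G : Matrix (Fin b) (Fin n) ℝ → (Fin n → ℝ))
    (hGA : G A = v) (hGc : ContinuousAt G A)
    (hG : ∀ X : Matrix (Fin b) (Fin n) ℝ,
      (∑ i, (G X i) ^ 2 = 1) ∧
      ∃ μ : ℝ, (Xᵀ * X).mulVec (G X) = μ • G X ∧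
        ∀ w : Fin n → ℝ, μ * (∑ i, (w i) ^ 2) ≤ w ⬝ᵥ ((Xᵀ * X).mulVec w)) :
    HasFDerivAt G (LinearMap.toContinuousLinearMap (jacMap Apinv v)) A := by
  classical
  have hvv : v ⬝ᵥ v = 1 := by
    simpa [dotProduct, pow_two] using hv
  -- the base point
  set p₀ : ((Fin n → ℝ) × ℝ) × Matrix (Fin b) (Fin n) ℝ := ((v, 0), A) with hp₀
  -- projections
  set pu : (((Fin n → ℝ) × ℝ) × Matrix (Fin b) (Fin n) ℝ) →L[ℝ] (Fin n → ℝ) :=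
    (ContinuousLinearMap.fst ℝ (Fin n → ℝ) ℝ).comp
      (ContinuousLinearMap.fst ℝ ((Fin n → ℝ) × ℝ) (Matrix (Fin b) (Fin n) ℝ)) with hpu
  set pm : (((Fin n → ℝ) × ℝ) × Matrix (Fin b) (Fin n) ℝ) →L[ℝ] ℝ :=
    (ContinuousLinearMap.snd ℝ (Fin n → ℝ) ℝ).comp
      (ContinuousLinearMap.fst ℝ ((Fin n → ℝ) × ℝ) (Matrix (Fin b) (Fin n) ℝ)) with hpm
  set pX : (((Fin n → ℝ) × ℝ) × Matrix (Fin b) (Fin n) ℝ) →L[ℝ] Matrix (Fin b) (Fin n) ℝ :=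
    ContinuousLinearMap.snd ℝ ((Fin n → ℝ) × ℝ) (Matrix (Fin b) (Fin n) ℝ) with hpX
  -- bijectivity of ell
  have hinj := ell_injective A v hvv hAv hsimple
  have hbij : Function.Bijective (ell A v) :=
    ⟨hinj, LinearMap.injective_iff_surjective.mp hinj⟩
  set Leq : (((Fin n → ℝ) × ℝ) × Matrix (Fin b) (Fin n) ℝ) ≃L[ℝ]
      (((Fin n → ℝ) × ℝ) × Matrix (Fin b) (Fin n) ℝ) :=
    (LinearEquiv.ofBijective (ell A v) hbij).toContinuousLinearEquiv with hLeq
  have hLeq_apply : ∀ q, Leq q = ell A v q := fun q => rfl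
  -- strict derivative of Phi at p₀
  have hΦL : HasStrictFDerivAt (Phi b n)
      (Leq : (((Fin n → ℝ) × ℝ) × Matrix (Fin b) (Fin n) ℝ) →L[ℝ]
        (((Fin n → ℝ) × ℝ) × Matrix (Fin b) (Fin n) ℝ)) p₀ := by
    have hu := pu.hasStrictFDerivAt (x := p₀)
    have hm := pm.hasStrictFDerivAt (x := p₀)
    have hX := pX.hasStrictFDerivAt (x := p₀)
    have ha : HasStrictFDerivAt (fun p : (((Fin n → ℝ) × ℝ) × Matrix (Fin b) (Fin n) ℝ) =>
        mulVecCLM b n (pX p) (pu p)) _ p₀ :=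
      (mulVecCLM b n).hasStrictFDerivAt_of_bilinear hX hu
    have hbb : HasStrictFDerivAt (fun p : (((Fin n → ℝ) × ℝ) × Matrix (Fin b) (Fin n) ℝ) =>
        tmulVecCLM b n (pX p) (mulVecCLM b n (pX p) (pu p))) _ p₀ :=
      (tmulVecCLM b n).hasStrictFDerivAt_of_bilinear hX ha
    have hcc : HasStrictFDerivAt (fun p : (((Fin n → ℝ) × ℝ) × Matrix (Fin b) (Fin n) ℝ) =>
        (ContinuousLinearMap.lsmul ℝ ℝ : ℝ →L[ℝ] (Fin n → ℝ) →L[ℝ] (Fin n → ℝ)) (pm p) (pu p))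
        _ p₀ :=
      (ContinuousLinearMap.lsmul ℝ ℝ).hasStrictFDerivAt_of_bilinear hm hu
    have hdd : HasStrictFDerivAt (fun p : (((Fin n → ℝ) × ℝ) × Matrix (Fin b) (Fin n) ℝ) =>
        dotCLM n (pu p) (pu p)) _ p₀ :=
      (dotCLM n).hasStrictFDerivAt_of_bilinear hu hu
    have h1 := (hbb.sub hcc)
    have h2 := hdd.sub_const 1
    have hfull := (h1.prodMk h2).prodMk hX
    refine hasStrictFDerivAt_congr_deriv (f := Phi b n) hfull ?_
    apply ContinuousLinearMap.ext
    intro q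
    obtain ⟨⟨y, ν⟩, Y⟩ := q
    refine Prod.ext (Prod.ext ?_ ?_) rfl
    · show Aᵀ *ᵥ (A *ᵥ y + Y *ᵥ v) + Yᵀ *ᵥ (A *ᵥ v) - ((0 : ℝ) • y + ν • v)
          = Aᵀ *ᵥ (A *ᵥ y) + Aᵀ *ᵥ (Y *ᵥ v) - ν • v
      simp [hAv, Matrix.mulVec_add]
    · show v ⬝ᵥ y + y ⬝ᵥ v = v ⬝ᵥ y + y ⬝ᵥ v
      rfl
  -- value of Phi at the base point
  have hΦp₀ : Phi b n p₀ = (((0 : Fin n → ℝ), (0 : ℝ)), A) := by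
    simp [Phi, hp₀, hAv, hvv]
  -- Penrose consequences
  have hAAA : Aᵀ * A * Apinv = Aᵀ := by
    calc Aᵀ * A * Apinv = Aᵀ * (A * Apinv) := Matrix.mul_assoc _ _ _
      _ = Aᵀ * (A * Apinv)ᵀ := by rw [hpinv.2.2.1]
      _ = (A * Apinv * A)ᵀ := (Matrix.transpose_mul (A * Apinv) A).symm
      _ = Aᵀ := by rw [hpinv.1]
  have hvp : v ᵥ* Apinv = 0 := by
    have hz : v ᵥ* (Apinv * A) = 0 := by
      rw [← hpinv.2.2.2, Matrix.vecMul_transpose, ← Matrix.mulVec_mulVec, hAv,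
        Matrix.mulVec_zero]
    calc v ᵥ* Apinv = v ᵥ* (Apinv * A * Apinv) := by rw [hpinv.2.1]
      _ = (v ᵥ* (Apinv * A)) ᵥ* Apinv := by rw [Matrix.vecMul_vecMul]
      _ = 0 := by rw [hz, Matrix.zero_vecMul]
  -- local inverse of Phi
  set ψ := hΦL.localInverse (Phi b n) Leq p₀ with hψdef
  have hψ : HasStrictFDerivAt ψ
      ((Leq.symm : (((Fin n → ℝ) × ℝ) × Matrix (Fin b) (Fin n) ℝ) →L[ℝ]
        (((Fin n → ℝ) × ℝ) × Matrix (Fin b) (Fin n) ℝ)))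
      (((0 : Fin n → ℝ), (0 : ℝ)), A) := by
    have h := hΦL.to_localInverse
    rwa [hΦp₀] at h
  -- the Lagrange multiplier function
  set m : Matrix (Fin b) (Fin n) ℝ → ℝ := fun X => G X ⬝ᵥ (Xᵀ *ᵥ (X *ᵥ G X)) with hmdef
  have hΦG : ∀ X, Phi b n ((G X, m X), X) = (((0 : Fin n → ℝ), (0 : ℝ)), X) := by
    intro X
    obtain ⟨hnorm, μ, heig, -⟩ := hG X
    have hGG : G X ⬝ᵥ G X = 1 := by simpa [dotProduct, pow_two] using hnorm
    have heig' : Xᵀ *ᵥ (X *ᵥ G X) = μ • G X := by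
      rw [Matrix.mulVec_mulVec]; exact heig
    have hmX : m X = μ := by
      rw [hmdef]; simp only
      rw [heig', dotProduct_smul, hGG, smul_eq_mul, mul_one]
    simp [Phi, heig', hmX, hGG]
  have hmA : m A = 0 := by
    rw [hmdef]; simp only
    rw [hGA, hAv, Matrix.mulVec_zero, dotProduct_zero]
  -- continuity of the solution data
  have c2 : ContinuousAt (fun X : Matrix (Fin b) (Fin n) ℝ => X *ᵥ G X) A :=
    ((mulVecCLM b n).isBoundedBilinearMap.continuous.continuousAt).comp
      (continuousAt_id.prodMk hGc)
  have c3 : ContinuousAt (fun X : Matrix (Fin b) (Fin n) ℝ => Xᵀ *ᵥ (X *ᵥ G X)) A :=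
    ((tmulVecCLM b n).isBoundedBilinearMap.continuous.continuousAt).comp
      (continuousAt_id.prodMk c2)
  have c4 : ContinuousAt m A :=
    ((dotCLM n).isBoundedBilinearMap.continuous.continuousAt).comp (hGc.prodMk c3)
  have hH : Filter.Tendsto (fun X => ((G X, m X), X)) (nhds A) (nhds p₀) := by
    have hHc : ContinuousAt (fun X => ((G X, m X), X)) A := (hGc.prodMk c4).prodMk continuousAt_id
    have h5 : ((G A, m A), A) = p₀ := by rw [hGA, hmA, hp₀]
    rw [← h5]
    exact hHc
  -- G agrees with the local inverse near A
  have hev2 : ∀ᶠ X in nhds A, ψ (((0 : Fin n → ℝ), (0 : ℝ)), X) = ((G X, m X), X) := by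
    filter_upwards [hH.eventually hΦL.eventually_left_inverse] with X hX
    rw [← hΦG X]; exact hX
  have hev3 : G =ᶠ[nhds A] fun X => (ψ (((0 : Fin n → ℝ), (0 : ℝ)), X)).1.1 := by
    filter_upwards [hev2] with X hX
    rw [hX]
  -- derivative of the composition
  have hinc : HasFDerivAt
      (fun X : Matrix (Fin b) (Fin n) ℝ => ((((0 : Fin n → ℝ), (0 : ℝ)), X)))
      (ContinuousLinearMap.inr ℝ ((Fin n → ℝ) × ℝ) (Matrix (Fin b) (Fin n) ℝ)) A :=
    (ContinuousLinearMap.inr ℝ ((Fin n → ℝ) × ℝ) (Matrix (Fin b) (Fin n) ℝ)).hasFDerivAt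
  have hcomp1 : HasFDerivAt (fun X => ψ (((0 : Fin n → ℝ), (0 : ℝ)), X))
      (((Leq.symm : (((Fin n → ℝ) × ℝ) × Matrix (Fin b) (Fin n) ℝ) →L[ℝ]
        (((Fin n → ℝ) × ℝ) × Matrix (Fin b) (Fin n) ℝ))).comp
        (ContinuousLinearMap.inr ℝ ((Fin n → ℝ) × ℝ) (Matrix (Fin b) (Fin n) ℝ))) A :=
    (hψ.hasFDerivAt).comp A hinc
  have hcomp2 : HasFDerivAt (fun X => (ψ (((0 : Fin n → ℝ), (0 : ℝ)), X)).1.1)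
      (pu.comp (((Leq.symm : (((Fin n → ℝ) × ℝ) × Matrix (Fin b) (Fin n) ℝ) →L[ℝ]
        (((Fin n → ℝ) × ℝ) × Matrix (Fin b) (Fin n) ℝ))).comp
        (ContinuousLinearMap.inr ℝ ((Fin n → ℝ) × ℝ) (Matrix (Fin b) (Fin n) ℝ)))) A :=
    (pu.hasFDerivAt).comp A hcomp1
  have hfinal := hcomp2.congr_of_eventuallyEq hev3
  -- identify the derivative
  have hDD : pu.comp (((Leq.symm : (((Fin n → ℝ) × ℝ) × Matrix (Fin b) (Fin n) ℝ) →L[ℝ]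
        (((Fin n → ℝ) × ℝ) × Matrix (Fin b) (Fin n) ℝ))).comp
        (ContinuousLinearMap.inr ℝ ((Fin n → ℝ) × ℝ) (Matrix (Fin b) (Fin n) ℝ)))
      = LinearMap.toContinuousLinearMap (jacMap Apinv v) := by
    apply ContinuousLinearMap.ext
    intro Y
    have hsymm : Leq.symm (((0 : (Fin n → ℝ) × ℝ)), Y)
        = ((-(Apinv *ᵥ (Y *ᵥ v)), (0 : ℝ)), Y) := by
      rw [ContinuousLinearEquiv.symm_apply_eq]
      rw [hLeq_apply]
      have e1 : Aᵀ *ᵥ (A *ᵥ (Apinv *ᵥ (Y *ᵥ v))) = Aᵀ *ᵥ (Y *ᵥ v) := by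
        rw [Matrix.mulVec_mulVec, Matrix.mulVec_mulVec, hAAA]
      have e2 : v ⬝ᵥ (Apinv *ᵥ (Y *ᵥ v)) = 0 := by
        rw [Matrix.dotProduct_mulVec, hvp, zero_dotProduct]
      simp only [ell, LinearMap.coe_mk, AddHom.coe_mk, Matrix.mulVec_neg, e1,
        neg_dotProduct, dotProduct_neg, e2, zero_smul, sub_zero,
        dotProduct_comm (-(Apinv *ᵥ (Y *ᵥ v))) v]
      simp [Prod.ext_iff]
    simp only [ContinuousLinearMap.coe_comp', Function.comp_apply,
      ContinuousLinearMap.inr_apply, ContinuousLinearMap.coe_fst', hpu,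
      ContinuousLinearEquiv.coe_coe]
    rw [hsymm]
    simp [jacMap]
  rw [← hDD]
  exact hfinal
end

section
/- Let Λ be a nilpotent d×d real matrix with Λ^d = 0, ζ > 0, M = Λ - (1/(3ζ))I, and C the d×d identity matrix. Then the solution Σ = ∫_0^∞ e^{Mt} e^{Mᵀt} dt of MΣ + ΣMᵀ + I = 0 equals the finite double sum Σ = ∑_{n=0}^{d-1} ∑_{m=0}^{d-1} (3ζ/2)^{n+m+1} ((n+m)!/(n!m!)) Λ^n (Λᵀ)^m. -/
open Matrix MeasureTheory Set

/-- The drift matrix `M = Λ - (1/(3ζ))I`. -/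
noncomputable def driftM {d : ℕ} (Λ : Matrix (Fin d) (Fin d) ℝ) (ζ : ℝ) :
    Matrix (Fin d) (Fin d) ℝ :=
  Λ - (1 / (3 * ζ)) • 1

/-- The solution `Σ = ∫₀^∞ e^{Mt} e^{Mᵀt} dt`, entrywise. -/
noncomputable def lyapSolId {d : ℕ} (Λ : Matrix (Fin d) (Fin d) ℝ) (ζ : ℝ) :
    Matrix (Fin d) (Fin d) ℝ :=
  Matrix.of fun i j => ∫ t in Set.Ioi (0:ℝ),
    (NormedSpace.exp (t • driftM Λ ζ) * (NormedSpace.exp (t • driftM Λ ζ))ᵀ) i j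

namespace Stmt18Aux

lemma smul_one_eq_diagonal' {d : ℕ} (r : ℝ) :
    r • (1 : Matrix (Fin d) (Fin d) ℝ) = Matrix.diagonal (fun _ => r) := by
  ext i j
  by_cases h : i = j <;> simp [Matrix.diagonal_apply, Matrix.one_apply, h]

lemma exp_smul_one {d : ℕ} (r : ℝ) :
    NormedSpace.exp (r • (1 : Matrix (Fin d) (Fin d) ℝ)) = Real.exp r • 1 := by
  rw [smul_one_eq_diagonal', Matrix.exp_diagonal, Pi.exp_def, ← Real.exp_eq_exp_ℝ,
    smul_one_eq_diagonal']

lemma exp_nilp {d : ℕ} (N : Matrix (Fin d) (Fin d) ℝ) (h : N ^ d = 0) :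
    NormedSpace.exp N = ∑ n ∈ Finset.range d, ((n.factorial : ℝ)⁻¹) • N ^ n := by
  rw [NormedSpace.exp_eq_tsum (𝕂 := ℝ)]
  refine tsum_eq_sum (fun n hn => ?_)
  rw [pow_eq_zero_of_le (le_of_not_gt (Finset.mem_range.not.mp hn)) h]
  simp

lemma exp_drift {d : ℕ} (Λ : Matrix (Fin d) (Fin d) ℝ) (hΛ : Λ ^ d = 0) (ζ : ℝ) (t : ℝ) :
    NormedSpace.exp (t • driftM Λ ζ)
      = ∑ n ∈ Finset.range d,
          (Real.exp (-(1 / (3 * ζ)) * t) * (t ^ n * (n.factorial : ℝ)⁻¹)) • Λ ^ n := by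
  have hsplit : t • driftM Λ ζ
      = (-(1 / (3 * ζ)) * t) • (1 : Matrix (Fin d) (Fin d) ℝ) + t • Λ := by
    unfold driftM; rw [smul_sub, smul_smul]; module
  have hcomm : Commute ((-(1 / (3 * ζ)) * t) • (1 : Matrix (Fin d) (Fin d) ℝ)) (t • Λ) :=
    (Commute.one_left (t • Λ)).smul_left _
  have hnil : (t • Λ) ^ d = 0 := by rw [smul_pow, hΛ, smul_zero]
  rw [hsplit, Matrix.exp_add_of_commute _ _ hcomm, exp_smul_one, exp_nilp _ hnil,
    Matrix.smul_mul, one_mul, Finset.smul_sum]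
  refine Finset.sum_congr rfl fun n _ => ?_
  rw [smul_pow, smul_smul, smul_smul]
  ring_nf

lemma prod_exp {d : ℕ} (Λ : Matrix (Fin d) (Fin d) ℝ) (hΛ : Λ ^ d = 0) (ζ : ℝ) (t : ℝ) :
    NormedSpace.exp (t • driftM Λ ζ) * (NormedSpace.exp (t • driftM Λ ζ))ᵀ
      = ∑ n ∈ Finset.range d, ∑ m ∈ Finset.range d,
          (Real.exp (-(2 / (3 * ζ)) * t) * t ^ (n + m)) •
            (((n.factorial : ℝ) * (m.factorial : ℝ))⁻¹ • (Λ ^ n * (Λᵀ) ^ m)) := by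
  rw [exp_drift Λ hΛ ζ t, transpose_sum, Finset.sum_mul_sum]
  refine Finset.sum_congr rfl fun n _ => Finset.sum_congr rfl fun m _ => ?_
  rw [transpose_smul, transpose_pow, smul_mul_assoc, mul_smul_comm, smul_smul, smul_smul]
  congr 1
  rw [mul_mul_mul_comm, ← Real.exp_add,
    show (-(1 / (3 * ζ)) * t + -(1 / (3 * ζ)) * t) = -(2 / (3 * ζ)) * t by ring, pow_add]
  ring

lemma int_poly_integrable (k : ℕ) {b : ℝ} (hb : 0 < b) :
    IntegrableOn (fun t : ℝ => Real.exp (-b * t) * t ^ k) (Ioi 0) := by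
  have h := integrableOn_rpow_mul_exp_neg_mul_rpow
    (by exact_mod_cast neg_one_lt_zero.trans_le (Nat.cast_nonneg k) : (-1:ℝ) < (k:ℝ)) zero_lt_one hb
  refine (h.congr_fun (fun x hx => ?_) measurableSet_Ioi)
  have hx0 : (0:ℝ) < x := hx
  beta_reduce
  rw [Real.rpow_natCast, Real.rpow_one, mul_comm]

lemma int_poly (k : ℕ) {b : ℝ} (hb : 0 < b) :
    ∫ t in Ioi (0:ℝ), Real.exp (-b * t) * t ^ k
      = (1 / b) ^ (k + 1) * (k.factorial : ℝ) := by
  have h := Real.integral_rpow_mul_exp_neg_mul_Ioi (a := (k:ℝ) + 1) (r := b)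
    (by positivity) hb
  rw [show ((k:ℝ) + 1 - 1) = (k:ℝ) by ring] at h
  have h2 : ∫ t in Ioi (0:ℝ), Real.exp (-b * t) * t ^ k
      = ∫ t in Ioi (0:ℝ), t ^ ((k:ℝ)) * Real.exp (-(b * t)) := by
    refine setIntegral_congr_fun measurableSet_Ioi (fun x hx => ?_)
    have hx0 : (0:ℝ) < x := hx
    rw [Real.rpow_natCast, mul_comm, neg_mul]
  rw [h2, h, Real.Gamma_nat_eq_factorial k, ← Real.rpow_natCast (1/b) (k+1)]
  push_cast
  ring_nf

lemma lyap_eq_sum {d : ℕ} (Λ : Matrix (Fin d) (Fin d) ℝ) (hΛ : Λ ^ d = 0)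
    {ζ : ℝ} (hζ : 0 < ζ) :
    lyapSolId Λ ζ
      = ∑ n ∈ Finset.range d, ∑ m ∈ Finset.range d,
          ((3 * ζ / 2) ^ (n + m + 1) *
            (((n + m).factorial : ℝ) / ((n.factorial : ℝ) * (m.factorial : ℝ)))) •
            (Λ ^ n * (Λᵀ) ^ m) := by
  have hb : (0:ℝ) < 2 / (3 * ζ) := by positivity
  ext i j
  rw [lyapSolId]
  simp only [Matrix.of_apply]
  calc
    (∫ t in Ioi (0:ℝ),
        (NormedSpace.exp (t • driftM Λ ζ) * (NormedSpace.exp (t • driftM Λ ζ))ᵀ) i j)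
      = ∫ t in Ioi (0:ℝ), ∑ n ∈ Finset.range d, ∑ m ∈ Finset.range d,
          Real.exp (-(2 / (3 * ζ)) * t) * t ^ (n + m) *
            ((((n.factorial : ℝ) * (m.factorial : ℝ))⁻¹ • (Λ ^ n * (Λᵀ) ^ m)) i j) := by
        refine setIntegral_congr_fun measurableSet_Ioi (fun t _ => ?_)
        rw [prod_exp Λ hΛ ζ t]
        simp [Finset.sum_apply, Matrix.sum_apply]
    _ = ∑ n ∈ Finset.range d, ∑ m ∈ Finset.range d,
          ∫ t in Ioi (0:ℝ), Real.exp (-(2 / (3 * ζ)) * t) * t ^ (n + m) *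
            ((((n.factorial : ℝ) * (m.factorial : ℝ))⁻¹ • (Λ ^ n * (Λᵀ) ^ m)) i j) := by
        rw [integral_finset_sum]
        · exact Finset.sum_congr rfl fun n _ => by
            rw [integral_finset_sum]
            exact fun m _ => (int_poly_integrable (n + m) hb).mul_const _
        · exact fun n _ => integrable_finset_sum _
            (fun m _ => (int_poly_integrable (n + m) hb).mul_const _)
    _ = ∑ n ∈ Finset.range d, ∑ m ∈ Finset.range d,
          ((3 * ζ / 2) ^ (n + m + 1) *
            (((n + m).factorial : ℝ) / ((n.factorial : ℝ) * (m.factorial : ℝ)))) *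
            ((Λ ^ n * (Λᵀ) ^ m) i j) := by
        refine Finset.sum_congr rfl fun n _ => Finset.sum_congr rfl fun m _ => ?_
        rw [MeasureTheory.integral_mul_const, int_poly (n + m) hb]
        have h13 : (1 / (2 / (3 * ζ))) = 3 * ζ / 2 := by
          field_simp
        rw [h13]
        simp only [Matrix.smul_apply, smul_eq_mul]
        ring
    _ = _ := by
        simp [Finset.sum_apply, Matrix.sum_apply]


noncomputable def aco (ζ : ℝ) (n m : ℕ) : ℝ :=
  (3 * ζ / 2) ^ (n + m + 1) *
    (((n + m).factorial : ℝ) / ((n.factorial : ℝ) * (m.factorial : ℝ)))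

lemma coeff_id {ζ : ℝ} (hζ : 0 < ζ) (n m : ℕ) :
    (if n = 0 then 0 else aco ζ (n - 1) m) + (if m = 0 then 0 else aco ζ n (m - 1))
      - (2 * (1 / (3 * ζ))) * aco ζ n m
      = if n = 0 ∧ m = 0 then (-1 : ℝ) else 0 := by
  have hz : (3 * ζ) ≠ 0 := by positivity
  match n, m with
  | 0, 0 =>
    simp [aco, Nat.factorial]
    field_simp
  | 0, l + 1 =>
    have hl : (l.factorial : ℝ) ≠ 0 := by positivity
    simp only [aco, Nat.factorial, if_true, if_neg (Nat.succ_ne_zero l), reduceIte]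
    simp only [Nat.zero_add, Nat.add_sub_cancel, zero_add]
    push_cast
    field_simp
    simp only [Nat.add_eq, Nat.zero_add, true_and, and_false, if_false, mul_zero, zero_mul, add_zero]
    ring
  | k + 1, 0 =>
    have hk : (k.factorial : ℝ) ≠ 0 := by positivity
    simp only [aco, Nat.factorial, if_neg (Nat.succ_ne_zero k), reduceIte]
    simp only [Nat.add_zero, Nat.add_sub_cancel, add_zero]
    push_cast
    field_simp
    simp
    ring
  | k + 1, l + 1 =>
    have hk : (k.factorial : ℝ) ≠ 0 := by positivity
    have hl : (l.factorial : ℝ) ≠ 0 := by positivity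
    have hkl : ((k + l + 1).factorial : ℝ) ≠ 0 := by positivity
    simp only [aco, if_neg (Nat.succ_ne_zero k), if_neg (Nat.succ_ne_zero l),
      Nat.add_sub_cancel, reduceIte]
    have e1 : k + 1 + (l + 1) = k + l + 1 + 1 := by omega
    have e2 : k + (l + 1) = k + l + 1 := by omega
    have e3 : k + 1 + l = k + l + 1 := by omega
    rw [e1, e2, e3]
    have f1 : ((k + l + 1 + 1).factorial : ℝ) = (k + l + 2) * ((k + l + 1).factorial : ℝ) := by
      rw [Nat.factorial_succ]; push_cast; ring
    have f2 : ((k + 1).factorial : ℝ) = (k + 1) * (k.factorial : ℝ) := by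
      rw [Nat.factorial_succ]; push_cast; ring
    have f3 : ((l + 1).factorial : ℝ) = (l + 1) * (l.factorial : ℝ) := by
      rw [Nat.factorial_succ]; push_cast; ring
    rw [f1, f2, f3]
    have hk1 : ((k : ℝ) + 1) ≠ 0 := by positivity
    have hl1 : ((l : ℝ) + 1) ≠ 0 := by positivity
    simp only [if_neg (by simp : ¬(k + 1 = 0 ∧ l + 1 = 0))]
    rw [pow_succ (3 * ζ / 2) (k + l + 1 + 1)]
    field_simp
    ring


lemma range_shift {M : Type*} [AddCommGroup M] {d : ℕ} (F : ℕ → M)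
    (h0 : F 0 = 0) (hd : F d = 0) :
    ∑ n ∈ Finset.range d, F (n + 1) = ∑ n ∈ Finset.range d, F n := by
  calc ∑ n ∈ Finset.range d, F (n + 1)
      = ∑ n ∈ Finset.range d, F (n + 1) + F 0 := by rw [h0, add_zero]
    _ = ∑ n ∈ Finset.range (d + 1), F n := (Finset.sum_range_succ' F d).symm
    _ = ∑ n ∈ Finset.range d, F n + F d := Finset.sum_range_succ F d
    _ = ∑ n ∈ Finset.range d, F n := by rw [hd, add_zero]

section main
variable {d : ℕ} (Λ : Matrix (Fin d) (Fin d) ℝ) (ζ : ℝ)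

lemma shiftL (hΛ : Λ ^ d = 0) :
    Λ * (∑ n ∈ Finset.range d, ∑ m ∈ Finset.range d, aco ζ n m • (Λ ^ n * (Λᵀ) ^ m))
      = ∑ n ∈ Finset.range d, ∑ m ∈ Finset.range d,
          (if n = 0 then (0:ℝ) else aco ζ (n - 1) m) • (Λ ^ n * (Λᵀ) ^ m) := by
  set F : ℕ → Matrix (Fin d) (Fin d) ℝ := fun n =>
    ∑ m ∈ Finset.range d, (if n = 0 then (0:ℝ) else aco ζ (n - 1) m) • (Λ ^ n * (Λᵀ) ^ m)
    with hF
  have h0 : F 0 = 0 := by simp [hF]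
  have hd : F d = 0 := by simp [hF, hΛ]
  have key : Λ * (∑ n ∈ Finset.range d, ∑ m ∈ Finset.range d,
      aco ζ n m • (Λ ^ n * (Λᵀ) ^ m)) = ∑ n ∈ Finset.range d, F (n + 1) := by
    rw [Finset.mul_sum]
    refine Finset.sum_congr rfl fun n _ => ?_
    rw [Finset.mul_sum, hF]
    refine Finset.sum_congr rfl fun m _ => ?_
    rw [if_neg (Nat.succ_ne_zero n), Nat.add_sub_cancel, mul_smul_comm, ← mul_assoc,
      ← pow_succ']
  rw [key, range_shift F h0 hd]

lemma shiftR (hΛ : Λ ^ d = 0) :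
    (∑ n ∈ Finset.range d, ∑ m ∈ Finset.range d, aco ζ n m • (Λ ^ n * (Λᵀ) ^ m)) * Λᵀ
      = ∑ n ∈ Finset.range d, ∑ m ∈ Finset.range d,
          (if m = 0 then (0:ℝ) else aco ζ n (m - 1)) • (Λ ^ n * (Λᵀ) ^ m) := by
  have hΛT : (Λᵀ) ^ d = 0 := by rw [← transpose_pow, hΛ, transpose_zero]
  rw [Finset.sum_mul]
  refine Finset.sum_congr rfl fun n _ => ?_
  set G : ℕ → Matrix (Fin d) (Fin d) ℝ := fun m =>
    (if m = 0 then (0:ℝ) else aco ζ n (m - 1)) • (Λ ^ n * (Λᵀ) ^ m) with hG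
  have h0 : G 0 = 0 := by simp [hG]
  have hd : G d = 0 := by simp [hG, hΛT]
  have key : (∑ m ∈ Finset.range d, aco ζ n m • (Λ ^ n * (Λᵀ) ^ m)) * Λᵀ
      = ∑ m ∈ Finset.range d, G (m + 1) := by
    rw [Finset.sum_mul]
    refine Finset.sum_congr rfl fun m _ => ?_
    rw [hG]
    simp only [if_neg (Nat.succ_ne_zero m), Nat.add_sub_cancel]
    rw [smul_mul_assoc, mul_assoc, ← pow_succ]
  rw [key, range_shift G h0 hd]


end main

lemma lyap_solves' {d : ℕ} (Λ : Matrix (Fin d) (Fin d) ℝ) (hΛ : Λ ^ d = 0)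
    {ζ : ℝ} (hζ : 0 < ζ) :
    driftM Λ ζ *
        (∑ n ∈ Finset.range d, ∑ m ∈ Finset.range d, aco ζ n m • (Λ ^ n * (Λᵀ) ^ m)) +
      (∑ n ∈ Finset.range d, ∑ m ∈ Finset.range d, aco ζ n m • (Λ ^ n * (Λᵀ) ^ m)) *
        (driftM Λ ζ)ᵀ + 1 = 0 := by
  rcases Nat.eq_zero_or_pos d with hd | hd
  · subst hd; ext i j; exact i.elim0
  set S := ∑ n ∈ Finset.range d, ∑ m ∈ Finset.range d, aco ζ n m • (Λ ^ n * (Λᵀ) ^ m) with hS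
  have ht : (driftM Λ ζ)ᵀ = Λᵀ - (1 / (3 * ζ)) • 1 := by
    unfold driftM; rw [transpose_sub, transpose_smul, transpose_one]
  have hM : driftM Λ ζ * S = Λ * S - (1 / (3 * ζ)) • S := by
    unfold driftM; rw [sub_mul, Matrix.smul_mul, one_mul]
  have hMT : S * (driftM Λ ζ)ᵀ = S * Λᵀ - (1 / (3 * ζ)) • S := by
    rw [ht, mul_sub, Matrix.mul_smul, mul_one]
  have e3 : (2 * (1 / (3 * ζ))) • S
      = ∑ n ∈ Finset.range d, ∑ m ∈ Finset.range d,
          ((2 * (1 / (3 * ζ))) * aco ζ n m) • (Λ ^ n * (Λᵀ) ^ m) := by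
    rw [hS, Finset.smul_sum]
    refine Finset.sum_congr rfl fun n _ => ?_
    rw [Finset.smul_sum]
    exact Finset.sum_congr rfl fun m _ => (smul_smul _ _ _)
  have e5 : ∑ n ∈ Finset.range d, ∑ m ∈ Finset.range d,
      ((if n = 0 then (0:ℝ) else aco ζ (n - 1) m) + (if m = 0 then (0:ℝ) else aco ζ n (m - 1))
        - (2 * (1 / (3 * ζ))) * aco ζ n m) • (Λ ^ n * (Λᵀ) ^ m)
      = -(1 : Matrix (Fin d) (Fin d) ℝ) := by
    have hco := coeff_id (ζ := ζ) hζ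
    calc ∑ n ∈ Finset.range d, ∑ m ∈ Finset.range d,
        ((if n = 0 then (0:ℝ) else aco ζ (n - 1) m) + (if m = 0 then (0:ℝ) else aco ζ n (m - 1))
          - (2 * (1 / (3 * ζ))) * aco ζ n m) • (Λ ^ n * (Λᵀ) ^ m)
        = ∑ n ∈ Finset.range d, ∑ m ∈ Finset.range d,
            (if n = 0 ∧ m = 0 then (-1:ℝ) else 0) • (Λ ^ n * (Λᵀ) ^ m) := by
          refine Finset.sum_congr rfl fun n _ => Finset.sum_congr rfl fun m _ => ?_
          rw [hco n m]
      _ = -(1 : Matrix (Fin d) (Fin d) ℝ) := by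
          rw [Finset.sum_eq_single 0]
          · rw [Finset.sum_eq_single 0]
            · simp
            · intro b _ hb; simp [hb]
            · intro h; exact absurd (Finset.mem_range.mpr hd) h
          · intro b _ hb
            refine Finset.sum_eq_zero fun m _ => ?_
            simp [hb]
          · intro h; exact absurd (Finset.mem_range.mpr hd) h
  have e4 : Λ * S + S * Λᵀ - (2 * (1 / (3 * ζ))) • S = -1 := by
    rw [shiftL Λ ζ hΛ, shiftR Λ ζ hΛ, e3, ← Finset.sum_add_distrib, ← Finset.sum_sub_distrib,
      ← e5]
    refine Finset.sum_congr rfl fun n _ => ?_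
    rw [← Finset.sum_add_distrib, ← Finset.sum_sub_distrib]
    refine Finset.sum_congr rfl fun m _ => ?_
    rw [← add_smul, ← sub_smul]
  have : driftM Λ ζ * S + S * (driftM Λ ζ)ᵀ
      = Λ * S + S * Λᵀ - (2 * (1 / (3 * ζ))) • S := by
    rw [hM, hMT, two_mul, add_smul]; abel
  rw [this, e4, neg_add_cancel]


end Stmt18Aux

/-- For nilpotent `Λ` (`Λ^d = 0`), `ζ > 0` and `M = Λ - (1/(3ζ))I`, the solution
`Σ = ∫₀^∞ e^{Mt} e^{Mᵀt} dt` of `MΣ + ΣMᵀ + I = 0` equals the finite double sum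
`∑_{n,m=0}^{d-1} (3ζ/2)^{n+m+1} ((n+m)!/(n!m!)) Λⁿ (Λᵀ)ᵐ`. -/
theorem stmt_18 (d : ℕ) (Λ : Matrix (Fin d) (Fin d) ℝ) (hΛ : Λ ^ d = 0)
    (ζ : ℝ) (hζ : 0 < ζ) :
    driftM Λ ζ * lyapSolId Λ ζ + lyapSolId Λ ζ * (driftM Λ ζ)ᵀ + 1 = 0 ∧
    lyapSolId Λ ζ
      = ∑ n ∈ Finset.range d, ∑ m ∈ Finset.range d,
          ((3 * ζ / 2) ^ (n + m + 1) *
            (((n + m).factorial : ℝ) / ((n.factorial : ℝ) * (m.factorial : ℝ)))) •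
            (Λ ^ n * (Λᵀ) ^ m) := by
  have h2 := Stmt18Aux.lyap_eq_sum Λ hΛ hζ
  refine ⟨?_, h2⟩
  rw [h2]
  exact Stmt18Aux.lyap_solves' Λ hΛ hζ
end
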